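/- Derivative of the Gallager-type exponent at zero: For the function E(ρ, λ) = −log₂( Σ_{a_i∈𝒳} Σ_{b∈𝒴} P^γ(a_i) P_{Y|X}(b|a_i)^{1/(1+ρ)} ( Σ_{a_j∈𝒳} P^λ(a_j|a_i) P_{Y|X}(b|a_j)^{1/(1+ρ)} )^ρ ), one has E(0, λ) = 0 and ∂E(ρ, λ)/∂ρ evaluated at ρ = 0 equals the Kullback–Leibler divergence D(P^γ_{XiY} ‖ Q^λ_{XiY}). -/

import Mathlib

open Finset

noncomputable section

/-- Kullback–Leibler divergence (base 2). -/
def KL2 {α : Type*} [Fintype α] (p q : α → ℝ) : ℝ :=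
  ∑ a, p a * Real.logb 2 (p a / q a)

variable {𝒳 𝒴 : Type*} [Fintype 𝒳] [Fintype 𝒴]

/-- First marginal `P^γ` of the joint law `P^λ` on `𝒳 × 𝒳`. -/
def Pg (Plam : 𝒳 → 𝒳 → ℝ) (a : 𝒳) : ℝ := ∑ b : 𝒳, Plam a b

/-- The Gallager-type exponent
`E(ρ, λ) = −log₂( Σ_{a_i} Σ_b P^γ(a_i) P(b|a_i)^{1/(1+ρ)}
  (Σ_{a_j} P^λ(a_j|a_i) P(b|a_j)^{1/(1+ρ)})^ρ )`. -/
def Egal (W : 𝒳 → 𝒴 → ℝ) (Plam : 𝒳 → 𝒳 → ℝ) (ρ : ℝ) : ℝ :=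
  - Real.logb 2 (∑ ai : 𝒳, ∑ b : 𝒴,
      Pg Plam ai * W ai b ^ (1 / (1 + ρ)) *
        (∑ aj : 𝒳, Plam ai aj / Pg Plam ai * W aj b ^ (1 / (1 + ρ))) ^ ρ)

/-- `P^γ_{XiY}(x, y) = P^γ(x) P_{Y|X}(y|x)`. -/
def PXY (W : 𝒳 → 𝒴 → ℝ) (Plam : 𝒳 → 𝒳 → ℝ) : 𝒳 × 𝒴 → ℝ :=
  fun p => Pg Plam p.1 * W p.1 p.2

/-- `Q^λ_{XiY}(x, y) = Σ_a P^λ(x, a) P_{Y|X}(y|a)`. -/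
def QXY (W : 𝒳 → 𝒴 → ℝ) (Plam : 𝒳 → 𝒳 → ℝ) : 𝒳 × 𝒴 → ℝ :=
  fun p => ∑ a : 𝒳, Plam p.1 a * W a p.2

lemma hasDerivAt_rpow_comp' (x : ℝ) (hx : 0 < x) :
    HasDerivAt (fun ρ : ℝ => x ^ (1 / (1 + ρ))) (-(x * Real.log x)) 0 := by
  have hs : HasDerivAt (fun ρ : ℝ => 1 / (1 + ρ)) (-1) 0 := by
    have h := ((hasDerivAt_id (0 : ℝ)).const_add 1).fun_inv (by norm_num)
    simp only [one_div]
    convert! h using 1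
    norm_num
  have h := (hs.const_mul (Real.log x)).exp
  have heq : (fun ρ : ℝ => x ^ (1 / (1 + ρ)))
      = fun ρ => Real.exp (Real.log x * (1 / (1 + ρ))) := by
    funext ρ; rw [Real.rpow_def_of_pos hx]
  rw [heq]
  convert h using 1
  rw [show (1:ℝ)/(1+0) = 1 by norm_num, mul_one, Real.exp_log hx]
  ring

/-- **Derivative of the Gallager-type exponent at zero**: `E(0, λ) = 0` and
`∂E(ρ, λ)/∂ρ |_{ρ=0} = D(P^γ_{XiY} ‖ Q^λ_{XiY})`. -/
theorem gallager_exponent_deriv_at_zero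
    (W : 𝒳 → 𝒴 → ℝ) (hWpos : ∀ x y, 0 < W x y) (hW1 : ∀ x, ∑ y, W x y = 1)
    (Plam : 𝒳 → 𝒳 → ℝ) (hpos : ∀ a b, 0 < Plam a b)
    (hsum : (∑ a : 𝒳, ∑ b : 𝒳, Plam a b) = 1) :
    Egal W Plam 0 = 0 ∧
      HasDerivAt (Egal W Plam) (KL2 (PXY W Plam) (QXY W Plam)) 0 := by
  have hX : Nonempty 𝒳 := by
    by_contra h
    rw [not_nonempty_iff] at h
    simp at hsum
  have hPg : ∀ a, 0 < Pg Plam a := fun a =>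
    Finset.sum_pos (fun b _ => hpos a b) Finset.univ_nonempty
  have hQ : ∀ (a : 𝒳) (b : 𝒴), 0 < QXY W Plam (a, b) := fun a b =>
    Finset.sum_pos (fun j _ => mul_pos (hpos a j) (hWpos j b)) Finset.univ_nonempty
  set F : ℝ → ℝ := fun ρ => ∑ ai : 𝒳, ∑ b : 𝒴,
      Pg Plam ai * W ai b ^ (1 / (1 + ρ)) *
        (∑ aj : 𝒳, Plam ai aj / Pg Plam ai * W aj b ^ (1 / (1 + ρ))) ^ ρ with hFdef
  have hEgal : Egal W Plam = fun ρ => -(Real.log (F ρ) / Real.log 2) := by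
    funext ρ
    rw [Egal, Real.logb, hFdef]
  have hF0 : F 0 = 1 := by
    have h1 : (1:ℝ) / (1 + 0) = 1 := by norm_num
    rw [hFdef]
    simp only [h1, Real.rpow_one, Real.rpow_zero, mul_one]
    calc (∑ ai : 𝒳, ∑ b : 𝒴, Pg Plam ai * W ai b) = ∑ ai : 𝒳, Pg Plam ai := by
          refine Finset.sum_congr rfl fun ai _ => ?_
          rw [← Finset.mul_sum, hW1, mul_one]
      _ = 1 := hsum
  have e0 : Egal W Plam 0 = 0 := by
    rw [hEgal]
    simp [hF0]
  refine ⟨e0, ?_⟩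
  have hterm : ∀ (ai : 𝒳) (b : 𝒴), HasDerivAt
      (fun ρ : ℝ => Pg Plam ai * W ai b ^ (1 / (1 + ρ)) *
          (∑ aj : 𝒳, Plam ai aj / Pg Plam ai * W aj b ^ (1 / (1 + ρ))) ^ ρ)
      (Pg Plam ai * W ai b *
        (Real.log (∑ aj : 𝒳, Plam ai aj / Pg Plam ai * W aj b) - Real.log (W ai b))) 0 := by
    intro ai b
    have hcpos : ∀ aj, 0 < Plam ai aj / Pg Plam ai := fun aj =>
      div_pos (hpos ai aj) (hPg ai)
    have hgpos : ∀ ρ : ℝ,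
        0 < ∑ aj : 𝒳, Plam ai aj / Pg Plam ai * W aj b ^ (1 / (1 + ρ)) := fun ρ =>
      Finset.sum_pos (fun aj _ => mul_pos (hcpos aj)
        (Real.rpow_pos_of_pos (hWpos aj b) _)) Finset.univ_nonempty
    have hg : HasDerivAt
        (fun ρ : ℝ => ∑ aj : 𝒳, Plam ai aj / Pg Plam ai * W aj b ^ (1 / (1 + ρ)))
        (∑ aj : 𝒳, Plam ai aj / Pg Plam ai * -(W aj b * Real.log (W aj b))) 0 :=
      HasDerivAt.fun_sum fun aj _ => (hasDerivAt_rpow_comp' _ (hWpos aj b)).const_mul _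
    have hlogg := hg.log (hgpos 0).ne'
    have hexp := ((hasDerivAt_id (0:ℝ)).fun_mul hlogg).exp
    have hh : HasDerivAt
        (fun ρ : ℝ => (∑ aj : 𝒳, Plam ai aj / Pg Plam ai * W aj b ^ (1 / (1 + ρ))) ^ ρ)
        (Real.log (∑ aj : 𝒳, Plam ai aj / Pg Plam ai * W aj b)) 0 := by
      have heq2 : (fun ρ : ℝ =>
            (∑ aj : 𝒳, Plam ai aj / Pg Plam ai * W aj b ^ (1 / (1 + ρ))) ^ ρ)
          = fun ρ : ℝ => Real.exp (ρ *
            Real.log (∑ aj : 𝒳, Plam ai aj / Pg Plam ai * W aj b ^ (1 / (1 + ρ)))) := by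
        funext ρ
        rw [Real.rpow_def_of_pos (hgpos ρ), mul_comm]
      rw [heq2]
      convert! hexp using 1
      norm_num [Real.rpow_one]
    have hA := (hasDerivAt_rpow_comp' (W ai b) (hWpos ai b)).const_mul (Pg Plam ai)
    convert! hA.fun_mul hh using 1
    norm_num [Real.rpow_one, Real.rpow_zero]
    ring
  have hFd : HasDerivAt F (∑ ai : 𝒳, ∑ b : 𝒴, Pg Plam ai * W ai b *
      (Real.log (∑ aj : 𝒳, Plam ai aj / Pg Plam ai * W aj b) - Real.log (W ai b))) 0 := by
    rw [hFdef]
    exact HasDerivAt.fun_sum fun ai _ => HasDerivAt.fun_sum fun b _ => hterm ai b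
  have hlogF := hFd.log (by rw [hF0]; norm_num)
  have hE := (hlogF.div_const (Real.log 2)).fun_neg
  rw [hEgal]
  convert! hE using 1
  rw [hF0, div_one]
  rw [KL2, Fintype.sum_prod_type, Finset.sum_div, ← Finset.sum_neg_distrib]
  refine Finset.sum_congr rfl fun ai _ => ?_
  rw [Finset.sum_div, ← Finset.sum_neg_distrib]
  refine Finset.sum_congr rfl fun b _ => ?_
  have hgQ : (∑ aj : 𝒳, Plam ai aj / Pg Plam ai * W aj b)
      = QXY W Plam (ai, b) / Pg Plam ai := by
    simp only [QXY]
    rw [Finset.sum_div]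
    exact Finset.sum_congr rfl fun aj _ => by ring
  simp only [PXY]
  rw [hgQ, Real.logb,
    Real.log_div (mul_pos (hPg ai) (hWpos ai b)).ne' (hQ ai b).ne',
    Real.log_mul (hPg ai).ne' (hWpos ai b).ne',
    Real.log_div (hQ ai b).ne' (hPg ai).ne']
  ring
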